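/- Let d ≥ 2, let V = diag(1, −1, …, −1) be the diagonal d×d matrix with V₀₀ = 1 and V_ii = −1 for i ≥ 1, and let Φ_I(ρ) = ρ and Φ_V(ρ) = V ρ Vᴴ be the corresponding unitary channels on d×d complex matrices, Δ = Φ_I − Φ_V. Then ‖Δ‖_ME = 4·√(d−1)/d, whereas ‖Δ‖_⋄ = 2. In particular ‖Δ‖_ME → 0 as d → ∞ while the two channels remain perfectly distinguishable with an optimal (separable) input, since the supremum defining ‖Δ‖_⋄ equals 2 already at the rank-one density matrix σ = |+⟩⟨+| with |+⟩ = (|0⟩ + |1⟩)/√2. -/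

import Mathlib

open Matrix Kronecker ComplexOrder

noncomputable section

/-- The square root of a positive semidefinite matrix, as `Matrix.PosSemidef.sqrt` was
defined in the older Mathlib (removed since). -/
noncomputable def psdSqrtOld {n : Type*} [Fintype n] [DecidableEq n] {A : Matrix n n ℂ}
    (hA : A.PosSemidef) : Matrix n n ℂ :=
  hA.1.eigenvectorUnitary.1 * diagonal ((↑) ∘ Real.sqrt ∘ hA.1.eigenvalues) *
  (star hA.1.eigenvectorUnitary : Matrix n n ℂ)

/-- The matrix absolute value `|A| = √(AᴴA)`. -/
noncomputable def matAbs {n : Type*} [Fintype n] [DecidableEq n] (A : Matrix n n ℂ) :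
    Matrix n n ℂ :=
  psdSqrtOld (Matrix.posSemidef_conjTranspose_mul_self A)

/-- The trace norm `‖A‖₁ = Tr √(AᴴA)`. -/
noncomputable def traceNorm {n : Type*} [Fintype n] [DecidableEq n] (A : Matrix n n ℂ) : ℝ :=
  ((matAbs A).trace).re

/-- The positive semidefinite square root of a PSD matrix (zero otherwise). -/
noncomputable def matSqrt {n : Type*} [Fintype n] [DecidableEq n] (σ : Matrix n n ℂ) :
    Matrix n n ℂ :=
  open scoped Classical in
  if h : σ.PosSemidef then psdSqrtOld h else 0

/-- A density matrix: positive semidefinite with unit trace. -/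
def IsDensity {n : Type*} [Fintype n] [DecidableEq n] (σ : Matrix n n ℂ) : Prop :=
  σ.PosSemidef ∧ σ.trace = 1

/-- The Choi operator of a linear map between matrix algebras. -/
noncomputable def choi {d m : ℕ}
    (S : Matrix (Fin d) (Fin d) ℂ →ₗ[ℂ] Matrix (Fin m) (Fin m) ℂ) :
    Matrix (Fin m × Fin d) (Fin m × Fin d) ℂ :=
  ∑ i : Fin d, ∑ j : Fin d,
    (S (Matrix.single i j 1)) ⊗ₖ (Matrix.single i j 1)

/-- The ME-norm `‖S‖_ME = ‖J(S)‖₁ / d`. -/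
noncomputable def MENorm {d m : ℕ}
    (S : Matrix (Fin d) (Fin d) ℂ →ₗ[ℂ] Matrix (Fin m) (Fin m) ℂ) : ℝ :=
  traceNorm (choi S) / d

/-- The diamond norm: supremum over density matrices σ of
`‖(1 ⊗ √σ) J(S) (1 ⊗ √σ)‖₁`. -/
noncomputable def diamondNorm {d m : ℕ}
    (S : Matrix (Fin d) (Fin d) ℂ →ₗ[ℂ] Matrix (Fin m) (Fin m) ℂ) : ℝ :=
  ⨆ σ : {σ : Matrix (Fin d) (Fin d) ℂ // IsDensity σ},
    traceNorm (((1 : Matrix (Fin m) (Fin m) ℂ) ⊗ₖ matSqrt σ.1) * choi S *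
      ((1 : Matrix (Fin m) (Fin m) ℂ) ⊗ₖ matSqrt σ.1))

/-- The M-operator `M(S) = Tr_B |J(S)|`. -/
noncomputable def Mop {d m : ℕ}
    (S : Matrix (Fin d) (Fin d) ℂ →ₗ[ℂ] Matrix (Fin m) (Fin m) ℂ) :
    Matrix (Fin d) (Fin d) ℂ :=
  Matrix.of fun k l => ∑ b : Fin m, matAbs (choi S) (b, k) (b, l)

/-- A quantum channel: completely positive (PSD Choi operator, by Choi's theorem)
and trace preserving. -/
def IsQChannel {d m : ℕ}
    (S : Matrix (Fin d) (Fin d) ℂ →ₗ[ℂ] Matrix (Fin m) (Fin m) ℂ) : Prop :=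
  (choi S).PosSemidef ∧ ∀ ρ : Matrix (Fin d) (Fin d) ℂ, (S ρ).trace = ρ.trace

/-- A POVM with `n` outcomes on `ℂ^d`. -/
def IsPOVM {d n : ℕ} (M : Fin n → Matrix (Fin d) (Fin d) ℂ) : Prop :=
  (∀ i, (M i).PosSemidef) ∧ ∑ i, M i = 1

/-- The measurement channel of a family of POVM elements:
`Φ_M(ρ) = ∑ i, Tr(ρ M_i) |i⟩⟨i|`. -/
noncomputable def measChannel {d n : ℕ} (M : Fin n → Matrix (Fin d) (Fin d) ℂ) :
    Matrix (Fin d) (Fin d) ℂ →ₗ[ℂ] Matrix (Fin n) (Fin n) ℂ where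
  toFun ρ := ∑ i, (ρ * M i).trace • Matrix.single i i (1 : ℂ)
  map_add' ρ σ := by
    simp [add_mul, Matrix.trace_add, add_smul, Finset.sum_add_distrib]
  map_smul' c ρ := by
    simp [Matrix.smul_mul, Matrix.trace_smul, smul_smul, Finset.smul_sum]

/-- The symmetric Werner-Holevo channel `Φ₊(ρ) = (Tr(ρ)·1 + ρᵀ)/(d+1)`. -/
noncomputable def whPlus (d : ℕ) :
    Matrix (Fin d) (Fin d) ℂ →ₗ[ℂ] Matrix (Fin d) (Fin d) ℂ where
  toFun ρ := ((d : ℂ) + 1)⁻¹ • (ρ.trace • (1 : Matrix (Fin d) (Fin d) ℂ) + ρ.transpose)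
  map_add' ρ σ := by
    simp [Matrix.trace_add, Matrix.transpose_add, add_smul, smul_add]
    module
  map_smul' c ρ := by
    simp [Matrix.trace_smul, Matrix.transpose_smul, smul_smul, smul_add]
    module

/-- The antisymmetric Werner-Holevo channel `Φ₋(ρ) = (Tr(ρ)·1 − ρᵀ)/(d−1)`. -/
noncomputable def whMinus (d : ℕ) :
    Matrix (Fin d) (Fin d) ℂ →ₗ[ℂ] Matrix (Fin d) (Fin d) ℂ where
  toFun ρ := ((d : ℂ) - 1)⁻¹ • (ρ.trace • (1 : Matrix (Fin d) (Fin d) ℂ) - ρ.transpose)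
  map_add' ρ σ := by
    simp [Matrix.trace_add, Matrix.transpose_add, add_smul]
    module
  map_smul' c ρ := by
    simp [Matrix.trace_smul, Matrix.transpose_smul, smul_smul]
    module

/-- The unitary (conjugation) channel `Φ_U(ρ) = U ρ Uᴴ`. -/
noncomputable def conjChannel {d : ℕ} (U : Matrix (Fin d) (Fin d) ℂ) :
    Matrix (Fin d) (Fin d) ℂ →ₗ[ℂ] Matrix (Fin d) (Fin d) ℂ where
  toFun ρ := U * ρ * Uᴴ
  map_add' ρ σ := by simp [Matrix.mul_add, Matrix.add_mul]
  map_smul' c ρ := by simp [Matrix.mul_smul, Matrix.smul_mul]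


/-- The unitary `V = diag(1, −1, …, −1)`. -/
noncomputable def V19 (d : ℕ) : Matrix (Fin d) (Fin d) ℂ :=
  Matrix.diagonal fun i => if (i : ℕ) = 0 then 1 else -1

/-- The vector `|+⟩ = (|0⟩ + |1⟩)/√2` in `ℂ^d`. -/
noncomputable def plusVec (d : ℕ) : Fin d → ℂ :=
  fun i => if (i : ℕ) = 0 ∨ (i : ℕ) = 1 then (((Real.sqrt 2)⁻¹ : ℝ) : ℂ) else 0

section Aux
variable {n : Type*} [Fintype n] [DecidableEq n]
set_option linter.unusedSectionVars false
set_option linter.unreachableTactic false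
set_option linter.unusedTactic false

open scoped MatrixOrder in
lemma psdSqrtOld_eq_cfc {A : Matrix n n ℂ} (hA : A.PosSemidef) : psdSqrtOld hA = CFC.sqrt A := by
  rw [CFC.sqrt_eq_cfc, cfc_nnreal_eq_real _ A, hA.1.cfc_eq]
  simp only [IsHermitian.cfc, psdSqrtOld, Real.coe_sqrt, Real.coe_toNNReal',
    Unitary.conjStarAlgAut_apply]
  congr 3
  funext i
  simp [hA.eigenvalues_nonneg i]

open scoped MatrixOrder in
lemma psdSqrtOld_psd {A : Matrix n n ℂ} (hA : A.PosSemidef) : (psdSqrtOld hA).PosSemidef := by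
  rw [psdSqrtOld_eq_cfc]; exact nonneg_iff_posSemidef.mp (CFC.sqrt_nonneg A)

open scoped MatrixOrder in
lemma psdSqrtOld_mul_self {A : Matrix n n ℂ} (hA : A.PosSemidef) :
    psdSqrtOld hA * psdSqrtOld hA = A := by
  rw [psdSqrtOld_eq_cfc]; exact CFC.sqrt_mul_sqrt_self A hA.nonneg

open scoped MatrixOrder in
lemma psdSqrtOld_unique {A N : Matrix n n ℂ} (hA : A.PosSemidef) (hN : N.PosSemidef)
    (h : N ^ 2 = A) : N = psdSqrtOld hA := by
  rw [psdSqrtOld_eq_cfc]; exact (CFC.sqrt_unique (by rw [← pow_two]; exact h) hN.nonneg).symm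

lemma outer_conjT (a b : n → ℂ) : (vecMulVec a (star b))ᴴ = vecMulVec b (star a) := by
  ext i j; simp [vecMulVec_apply, conjTranspose_apply, mul_comm]

lemma outer_mul_outer (a b c e : n → ℂ) :
    vecMulVec a (star b) * vecMulVec c (star e) = (star b ⬝ᵥ c) • vecMulVec a (star e) := by
  ext i j
  simp only [mul_apply, vecMulVec_apply, Matrix.smul_apply, dotProduct, smul_eq_mul, Finset.sum_mul,
    Finset.mul_sum, Pi.star_apply]
  congr 1; ext k; ring

lemma psd_outer_self (a : n → ℂ) : (vecMulVec a (star a)).PosSemidef := by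
  apply PosSemidef.of_dotProduct_mulVec_nonneg
  · exact outer_conjT a a
  · intro x
    have : star x ⬝ᵥ (vecMulVec a (star a) *ᵥ x) = star (star a ⬝ᵥ x) * (star a ⬝ᵥ x) := by
      simp only [dotProduct, mulVec, vecMulVec_apply, Pi.star_apply, star_sum, star_mul',
        Finset.sum_mul, Finset.mul_sum, star_star]
      rw [Finset.sum_comm]
      congr 1; ext k; congr 1; ext l; ring
    rw [this]
    exact star_mul_self_nonneg _

lemma trace_outer_self (a : n → ℂ) : (vecMulVec a (star a)).trace = star a ⬝ᵥ a := by
  simp [trace, Matrix.diag, vecMulVec_apply, dotProduct, mul_comm]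

lemma psd_real_smul {A : Matrix n n ℂ} (hA : A.PosSemidef) {c : ℝ} (hc : 0 ≤ c) :
    (((c : ℂ)) • A).PosSemidef := by
  apply PosSemidef.of_dotProduct_mulVec_nonneg
  · unfold Matrix.IsHermitian
    rw [conjTranspose_smul, hA.1.eq]
    simp
  · intro x
    rw [smul_mulVec, dotProduct_smul, smul_eq_mul]
    exact mul_nonneg (by exact_mod_cast hc) (hA.dotProduct_mulVec_nonneg x)

lemma matAbs_eq {A N : Matrix n n ℂ} (hN : N.PosSemidef) (h : N ^ 2 = Aᴴ * A) :
    matAbs A = N :=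
  (psdSqrtOld_unique _ hN h).symm

lemma dot_self_eq (a : n → ℂ) : star a ⬝ᵥ a = ((∑ i, Complex.normSq (a i) : ℝ) : ℂ) := by
  push_cast
  simp [dotProduct, Complex.normSq_eq_conj_mul_self]

lemma dot_self_re_nonneg (a : n → ℂ) : 0 ≤ (star a ⬝ᵥ a).re := by
  rw [dot_self_eq]
  simp only [Complex.ofReal_re]
  exact Finset.sum_nonneg fun i _ => Complex.normSq_nonneg _

lemma dot_self_re_pos {a : n → ℂ} (ha : a ≠ 0) : 0 < (star a ⬝ᵥ a).re := by
  rw [dot_self_eq]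
  simp only [Complex.ofReal_re]
  obtain ⟨i, hi⟩ : ∃ i, a i ≠ 0 := by
    by_contra h; push_neg at h; exact ha (funext h)
  exact Finset.sum_pos' (fun j _ => Complex.normSq_nonneg _)
    ⟨i, Finset.mem_univ i, Complex.normSq_pos.mpr hi⟩

lemma star_dot_comm (a b : n → ℂ) : star b ⬝ᵥ a = star (star a ⬝ᵥ b) := by
  simp [dotProduct, star_sum, mul_comm]

lemma traceNorm_outer_sym (a b : n → ℂ) (hab : star a ⬝ᵥ b = 0) :
    traceNorm (vecMulVec a (star b) + vecMulVec b (star a))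
      = 2 * Real.sqrt ((star a ⬝ᵥ a).re) * Real.sqrt ((star b ⬝ᵥ b).re) := by
  have hba : star b ⬝ᵥ a = 0 := by rw [star_dot_comm, hab, star_zero]
  by_cases ha : a = 0
  · subst ha
    have h0 : traceNorm (0 : Matrix n n ℂ) = 0 := by
      have : matAbs (0 : Matrix n n ℂ) = 0 :=
        matAbs_eq Matrix.PosSemidef.zero (by simp)
      simp [traceNorm, this]
    rw [show (vecMulVec (0:n→ℂ) (star b) + vecMulVec b (star (0:n→ℂ))) = (0 : Matrix n n ℂ) by
      ext i j; simp [vecMulVec_apply], h0]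
    simp [dotProduct]
  by_cases hb : b = 0
  · subst hb
    have h0 : traceNorm (0 : Matrix n n ℂ) = 0 := by
      have : matAbs (0 : Matrix n n ℂ) = 0 :=
        matAbs_eq Matrix.PosSemidef.zero (by simp)
      simp [traceNorm, this]
    rw [show (vecMulVec a (star (0:n→ℂ)) + vecMulVec (0:n→ℂ) (star a)) = (0 : Matrix n n ℂ) by
      ext i j; simp [vecMulVec_apply], h0]
    simp [dotProduct]
  set α := (star a ⬝ᵥ a).re with hαdef
  set β := (star b ⬝ᵥ b).re with hβdef
  have hα : 0 < α := dot_self_re_pos ha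
  have hβ : 0 < β := dot_self_re_pos hb
  have hαc : star a ⬝ᵥ a = (α : ℂ) := by
    rw [dot_self_eq]; rw [hαdef, dot_self_eq]; simp
  have hβc : star b ⬝ᵥ b = (β : ℂ) := by
    rw [dot_self_eq]; rw [hβdef, dot_self_eq]; simp
  set na := Real.sqrt α with hna
  set nb := Real.sqrt β with hnb
  have hna2 : na ^ 2 = α := Real.sq_sqrt hα.le
  have hnb2 : nb ^ 2 = β := Real.sq_sqrt hβ.le
  have hnapos : 0 < na := Real.sqrt_pos.mpr hα
  have hnbpos : 0 < nb := Real.sqrt_pos.mpr hβ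
  set M := vecMulVec a (star b) + vecMulVec b (star a) with hM
  set N := ((nb/na : ℝ) : ℂ) • vecMulVec a (star a) + ((na/nb : ℝ) : ℂ) • vecMulVec b (star b)
    with hN
  have hNpsd : N.PosSemidef :=
    (psd_real_smul (psd_outer_self a) (by positivity)).add
      (psd_real_smul (psd_outer_self b) (by positivity))
  have hMherm : Mᴴ = M := by
    rw [hM, conjTranspose_add, outer_conjT, outer_conjT, add_comm]
  have hMM : M * M = (β : ℂ) • vecMulVec a (star a) + (α : ℂ) • vecMulVec b (star b) := by
    rw [hM]
    simp only [add_mul, mul_add, outer_mul_outer, hab, hba, hαc, hβc, zero_smul, add_zero,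
      zero_add]
    abel
  have hNN : N ^ 2 = M * M := by
    rw [hMM, hN, pow_two]
    simp only [add_mul, mul_add, smul_mul_assoc, mul_smul_comm, outer_mul_outer, hab, hba,
      hαc, hβc, zero_smul, smul_zero, add_zero, zero_add, smul_smul]
    have e1r : (nb/na) * ((nb/na) * α) = β := by
      field_simp
      nlinarith [hna2, hnb2]
    have e2r : (na/nb) * ((na/nb) * β) = α := by
      field_simp
      nlinarith [hna2, hnb2]
    have e1 : ((nb/na : ℝ) : ℂ) * (((nb/na : ℝ) : ℂ) * (α : ℂ)) = (β : ℂ) := by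
      exact_mod_cast e1r
    have e2 : ((na/nb : ℝ) : ℂ) * (((na/nb : ℝ) : ℂ) * (β : ℂ)) = (α : ℂ) := by
      exact_mod_cast e2r
    rw [e1, e2]
  have habs : matAbs M = N := matAbs_eq hNpsd (by rw [hMherm, hNN])
  have h1 : traceNorm M = ((nb/na) * α + (na/nb) * β) := by
    rw [traceNorm, habs, hN]
    rw [trace_add, trace_smul, trace_smul, trace_outer_self, trace_outer_self, hαc, hβc]
    push_cast
    simp
  rw [h1]
  have : nb / na * α + na / nb * β = 2 * na * nb := by
    field_simp
    nlinarith [hna2, hnb2]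
  rw [this]

lemma kron_conjT {m : Type*} [Fintype m] [DecidableEq m] (A : Matrix m m ℂ) (B : Matrix n n ℂ) :
    (A ⊗ₖ B)ᴴ = Aᴴ ⊗ₖ Bᴴ := by
  ext p q
  simp [conjTranspose_apply, kroneckerMap_apply, mul_comm]

lemma mul_outer_mul (P Q : Matrix n n ℂ) (x y : n → ℂ) :
    P * vecMulVec x (star y) * Q = vecMulVec (P *ᵥ x) (star (Qᴴ *ᵥ y)) := by
  ext i j
  simp only [mul_apply, vecMulVec_apply, mulVec, dotProduct, Pi.star_apply, star_sum,
    star_mul', conjTranspose_apply, star_star, Finset.sum_mul, Finset.mul_sum]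
  congr 1; ext s; congr 1; ext r; ring

-- the specific vectors (d = e + 2)
noncomputable def aV (e : ℕ) : Fin (e+2) × Fin (e+2) → ℂ :=
  fun p => if p.1 = 0 ∧ p.2 = 0 then (Real.sqrt 2 : ℂ) else 0
noncomputable def bV (e : ℕ) : Fin (e+2) × Fin (e+2) → ℂ :=
  fun p => if p.1 = p.2 ∧ p.1 ≠ 0 then (Real.sqrt 2 : ℂ) else 0

lemma fin_val_eq_zero_iff {k : ℕ} (i : Fin (k+2)) : (i : ℕ) = 0 ↔ i = 0 := by
  rw [Fin.ext_iff]; simp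

lemma sqrt2_mul_self : (Real.sqrt 2 : ℂ) * (Real.sqrt 2 : ℂ) = 2 := by
  rw [← Complex.ofReal_mul, Real.mul_self_sqrt (by norm_num)]
  norm_num

lemma choi_apply {d m : ℕ} (S : Matrix (Fin d) (Fin d) ℂ →ₗ[ℂ] Matrix (Fin m) (Fin m) ℂ)
    (p q : Fin m × Fin d) : choi S p q = (S (Matrix.single p.2 q.2 1)) p.1 q.1 := by
  simp [choi, Matrix.sum_apply, kroneckerMap_apply, Matrix.single, Matrix.of_apply,
    ite_and, mul_ite, mul_one, mul_zero, Finset.sum_ite_eq, Finset.sum_ite_eq']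

lemma choi_Delta (e : ℕ) :
    choi (LinearMap.id - conjChannel (V19 (e+2))) =
      vecMulVec (aV e) (star (bV e)) + vecMulVec (bV e) (star (aV e)) := by
  ext p q
  rw [choi_apply]
  simp only [LinearMap.sub_apply, LinearMap.id_apply, conjChannel, LinearMap.coe_mk,
    AddHom.coe_mk, V19, diagonal_conjTranspose, Matrix.sub_apply, Matrix.add_apply,
    vecMulVec_apply, Pi.star_apply, aV, bV]
  obtain ⟨p1, p2⟩ := p; obtain ⟨q1, q2⟩ := q
  simp only [Matrix.mul_diagonal, Matrix.diagonal_mul, Matrix.single, Matrix.of_apply,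
    Pi.star_apply, fin_val_eq_zero_iff, Fin.isValue]
  by_cases h1 : p2 = p1 <;> by_cases h2 : q2 = q1 <;>
    by_cases h3 : p1 = 0 <;> by_cases h4 : q1 = 0 <;>
    simp_all [apply_ite (star : ℂ → ℂ), sqrt2_mul_self, fin_val_eq_zero_iff, eq_comm] <;> ring_nf <;>
    simp [sqrt2_mul_self] <;> norm_num


lemma dot_ab (e : ℕ) : star (aV e) ⬝ᵥ bV e = 0 := by
  apply Finset.sum_eq_zero
  rintro ⟨i, k⟩ -
  simp only [aV, bV, Pi.star_apply]
  by_cases h1 : i = 0 <;> by_cases h2 : k = 0 <;> by_cases h3 : i = k <;> simp_all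

lemma dot_aa (e : ℕ) : star (aV e) ⬝ᵥ aV e = 2 := by
  simp [aV, dotProduct, Fintype.sum_prod_type, apply_ite (star : ℂ → ℂ), ite_and,
    mul_ite, ite_mul, Finset.sum_ite_eq, Finset.sum_ite_eq', sqrt2_mul_self]

lemma dot_bb (e : ℕ) : star (bV e) ⬝ᵥ bV e = 2 * ((e : ℂ) + 1) := by
  have step : ∀ i : Fin (e+2),
      (if i = 0 then (0:ℂ) else 2) = 2 - (if i = 0 then 2 else 0) := by
    intro i; split <;> norm_num
  calc star (bV e) ⬝ᵥ bV e
      = ∑ i : Fin (e+2), (if i = 0 then (0:ℂ) else 2) := by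
        simp only [dotProduct, Fintype.sum_prod_type, bV, Pi.star_apply]
        refine Finset.sum_congr rfl fun i _ => ?_
        by_cases h1 : i = 0
        · subst h1
          apply Finset.sum_eq_zero
          intro k _
          by_cases h3 : (0 : Fin (e+2)) = k <;> simp_all
        · rw [Finset.sum_eq_single i]
          · simp [h1, sqrt2_mul_self]
          · intro k _ hk; simp [Ne.symm hk]
          · simp
    _ = 2 * ((e : ℂ) + 1) := by
        rw [Finset.sum_congr rfl fun i _ => step i, Finset.sum_sub_distrib,
          Finset.sum_const, Finset.sum_ite_eq' Finset.univ (0 : Fin (e+2)) (fun _ => (2:ℂ))]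
        simp [Finset.card_univ]
        push_cast
        ring

lemma sqrt_two_mul_sqrt_two_mul (x : ℝ) (hx : 0 ≤ x) :
    Real.sqrt 2 * Real.sqrt (2 * x) = 2 * Real.sqrt x := by
  rw [← Real.sqrt_mul (by norm_num), ← mul_assoc]
  rw [show (2:ℝ) * 2 = 4 by norm_num, Real.sqrt_mul (by norm_num),
    show (4:ℝ) = 2^2 by norm_num, Real.sqrt_sq (by norm_num)]

lemma traceNorm_choi_Delta (e : ℕ) :
    traceNorm (choi (LinearMap.id - conjChannel (V19 (e+2)))) =
      4 * Real.sqrt ((e : ℝ) + 1) := by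
  rw [choi_Delta, traceNorm_outer_sym _ _ (dot_ab e), dot_aa, dot_bb]
  have h1 : ((2 : ℂ)).re = 2 := by norm_num
  have h2 : ((2 * ((e : ℂ) + 1))).re = 2 * ((e : ℝ) + 1) := by
    norm_cast
  rw [h1, h2, mul_assoc, sqrt_two_mul_sqrt_two_mul _ (by positivity)]
  ring

lemma psd_diag_re_nonneg {A : Matrix n n ℂ} (hA : A.PosSemidef) (i : n) :
    0 ≤ (A i i).re ∧ (A i i).im = 0 := by
  have h := hA.dotProduct_mulVec_nonneg (Pi.single i 1)
  have heq : star (Pi.single i 1) ⬝ᵥ (A *ᵥ Pi.single i 1) = A i i := by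
    simp [mulVec_single, dotProduct, Pi.single_apply, apply_ite (star : ℂ → ℂ),
      Finset.sum_ite_eq, ite_mul]
  rw [heq, Complex.nonneg_iff] at h
  exact ⟨h.1, h.2.symm⟩

/-- The key computation for the diamond norm. -/
lemma traceNorm_conj (e : ℕ) (σ : Matrix (Fin (e+2)) (Fin (e+2)) ℂ) (hσ : IsDensity σ) :
    traceNorm (((1 : Matrix (Fin (e+2)) (Fin (e+2)) ℂ) ⊗ₖ matSqrt σ) *
        choi (LinearMap.id - conjChannel (V19 (e+2))) *
        ((1 : Matrix (Fin (e+2)) (Fin (e+2)) ℂ) ⊗ₖ matSqrt σ))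
      = 2 * Real.sqrt (2 * (σ 0 0).re) * Real.sqrt (2 * (1 - (σ 0 0).re)) := by
  have hS : matSqrt σ = psdSqrtOld hσ.1 := dif_pos hσ.1
  set S := matSqrt σ with hSdef
  have hSps : S.PosSemidef := by rw [hS]; exact psdSqrtOld_psd hσ.1
  have hSherm : Sᴴ = S := hSps.1
  have hSS : S * S = σ := by rw [hS]; exact psdSqrtOld_mul_self hσ.1
  set P := (1 : Matrix (Fin (e+2)) (Fin (e+2)) ℂ) ⊗ₖ S with hPdef
  have hPherm : Pᴴ = P := by
    rw [hPdef, kron_conjT, conjTranspose_one, hSherm]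
  have hPP : P * P = (1 : Matrix (Fin (e+2)) (Fin (e+2)) ℂ) ⊗ₖ σ := by
    rw [hPdef, ← Matrix.mul_kronecker_mul, Matrix.one_mul, hSS]
  have key : ∀ x y : Fin (e+2) × Fin (e+2) → ℂ,
      star (P *ᵥ x) ⬝ᵥ (P *ᵥ y) =
        star x ⬝ᵥ (((1 : Matrix (Fin (e+2)) (Fin (e+2)) ℂ) ⊗ₖ σ) *ᵥ y) := by
    intro x y
    rw [star_mulVec, Matrix.dotProduct_mulVec, Matrix.vecMul_vecMul, hPherm, hPP,
      ← Matrix.dotProduct_mulVec]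
  have zform : ∀ (x : Fin (e+2) × Fin (e+2) → ℂ) (p : Fin (e+2) × Fin (e+2)),
      (((1 : Matrix (Fin (e+2)) (Fin (e+2)) ℂ) ⊗ₖ σ) *ᵥ x) p = ∑ l, σ p.2 l * x (p.1, l) := by
    intro x p
    simp [mulVec, dotProduct, Fintype.sum_prod_type, kroneckerMap_apply, Matrix.one_apply,
      ite_mul, Finset.sum_ite_eq, Finset.sum_ite_eq']
  have cQ1 : star (aV e) ⬝ᵥ (((1 : Matrix (Fin (e+2)) (Fin (e+2)) ℂ) ⊗ₖ σ) *ᵥ bV e) = 0 := by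
    apply Finset.sum_eq_zero
    rintro ⟨i, k⟩ -
    by_cases h1 : i = 0 <;> by_cases h2 : k = 0
    · subst h1; subst h2
      rw [zform]
      simp only [aV, Pi.star_apply]
      rw [Finset.sum_eq_zero]
      · simp
      · intro l _
        simp [bV]
    all_goals simp [aV, h1, h2]
  have cQ2 : star (aV e) ⬝ᵥ (((1 : Matrix (Fin (e+2)) (Fin (e+2)) ℂ) ⊗ₖ σ) *ᵥ aV e)
      = 2 * σ 0 0 := by
    rw [dotProduct, Finset.sum_eq_single ((0 : Fin (e+2)), (0 : Fin (e+2)))]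
    · rw [zform, Finset.sum_eq_single (0 : Fin (e+2))]
      · have ha00 : aV e ((0:Fin (e+2)), (0:Fin (e+2))) = (Real.sqrt 2 : ℂ) := by simp [aV]
        simp only [Pi.star_apply]
        rw [ha00, Complex.star_def, Complex.conj_ofReal]
        linear_combination (σ 0 0) * sqrt2_mul_self
      · intro l _ hl; simp [aV, hl]
      · simp
    · rintro ⟨i, k⟩ - hp
      have : ¬(i = 0 ∧ k = 0) := by
        simpa [Prod.ext_iff] using hp
      simp [aV, this]
    · simp
  have cQ3 : star (bV e) ⬝ᵥ (((1 : Matrix (Fin (e+2)) (Fin (e+2)) ℂ) ⊗ₖ σ) *ᵥ bV e)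
      = 2 * (1 - σ 0 0) := by
    have hz : ∀ i : Fin (e+2), i ≠ 0 →
        (((1 : Matrix (Fin (e+2)) (Fin (e+2)) ℂ) ⊗ₖ σ) *ᵥ bV e) (i,i)
          = σ i i * (Real.sqrt 2 : ℂ) := by
      intro i hi
      rw [zform, Finset.sum_eq_single i]
      · simp [bV, hi]
      · intro l _ hl
        have : ¬(i = l) := fun h => hl h.symm
        simp [bV, this]
      · simp
    calc star (bV e) ⬝ᵥ (((1 : Matrix (Fin (e+2)) (Fin (e+2)) ℂ) ⊗ₖ σ) *ᵥ bV e)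
        = ∑ i : Fin (e+2), (if i = 0 then (0:ℂ) else 2 * σ i i) := by
          rw [dotProduct, Fintype.sum_prod_type]
          refine Finset.sum_congr rfl fun i _ => ?_
          by_cases hi : i = 0
          · subst hi
            simp only [if_pos rfl]
            apply Finset.sum_eq_zero
            intro k _
            simp [bV]
          · rw [Finset.sum_eq_single i]
            · rw [hz i hi, if_neg hi]
              have hbii : bV e (i, i) = (Real.sqrt 2 : ℂ) := by simp [bV, hi]
              simp only [Pi.star_apply]
              rw [hbii, Complex.star_def, Complex.conj_ofReal]
              linear_combination (σ i i) * sqrt2_mul_self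
            · intro k _ hk
              have : ¬(i = k) := fun h => hk h.symm
              simp [bV, this]
            · simp
      _ = 2 * (σ.trace - σ 0 0) := by
          have step : ∀ i : Fin (e+2), (if i = 0 then (0:ℂ) else 2 * σ i i)
              = 2 * σ i i - (if i = 0 then 2 * σ i i else 0) := by
            intro i; split <;> ring
          rw [Finset.sum_congr rfl fun i _ => step i, Finset.sum_sub_distrib, ← Finset.mul_sum,
            Finset.sum_ite_eq' Finset.univ (0 : Fin (e+2))]
          simp [Matrix.trace, Matrix.diag]
          ring
      _ = 2 * (1 - σ 0 0) := by rw [hσ.2]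
  have him : (σ 0 0).im = 0 := (psd_diag_re_nonneg hσ.1 0).2
  rw [choi_Delta, Matrix.mul_add, Matrix.add_mul, mul_outer_mul, mul_outer_mul, hPherm,
    traceNorm_outer_sym _ _ (by rw [key, cQ1]), key, key, cQ2, cQ3]
  congr 2
  · rw [Complex.mul_re]
    simp [him]
  · rw [Complex.mul_re]
    simp [him, Complex.sub_re]

lemma fin_val_eq_one_iff {k : ℕ} (i : Fin (k+2)) : (i : ℕ) = 1 ↔ i = 1 := by
  rw [Fin.ext_iff]
  simp [Fin.val_one]

lemma inv_sqrt2_sq : (Real.sqrt 2)⁻¹ * (Real.sqrt 2)⁻¹ = 1/2 := by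
  rw [← mul_inv]
  rw [Real.mul_self_sqrt (by norm_num)]
  norm_num

lemma plus_density (e : ℕ) :
    IsDensity (vecMulVec (plusVec (e+2)) (star (plusVec (e+2)))) := by
  refine ⟨psd_outer_self _, ?_⟩
  rw [trace_outer_self, dot_self_eq]
  have step : ∀ i : Fin (e+2),
      Complex.normSq (plusVec (e+2) i)
        = (if i = 0 then (1/2 : ℝ) else 0) + (if i = 1 then (1/2 : ℝ) else 0) := by
    intro i
    simp only [plusVec, fin_val_eq_zero_iff, fin_val_eq_one_iff]
    by_cases h0 : i = 0 <;> by_cases h1 : i = 1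
    · subst h0; simp [Fin.ext_iff] at h1
    · simp [h0, Complex.normSq_ofReal, inv_sqrt2_sq]
    · simp [h0, h1, Complex.normSq_ofReal, inv_sqrt2_sq]
    · simp [h0, h1]
  rw [Finset.sum_congr rfl fun i _ => step i, Finset.sum_add_distrib,
    Finset.sum_ite_eq' Finset.univ (0 : Fin (e+2)), Finset.sum_ite_eq' Finset.univ (1 : Fin (e+2))]
  norm_num

lemma plus_00 (e : ℕ) :
    ((vecMulVec (plusVec (e+2)) (star (plusVec (e+2)))) 0 0).re = 1/2 := by
  simp only [vecMulVec_apply, Pi.star_apply, plusVec]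
  norm_num [fin_val_eq_zero_iff]
  rw [div_mul_div_comm, Real.mul_self_sqrt (by norm_num)]
  norm_num

lemma bound_le_two {t : ℝ} (h0 : 0 ≤ t) (h1 : t ≤ 1) :
    2 * Real.sqrt (2*t) * Real.sqrt (2*(1-t)) ≤ 2 := by
  have key : Real.sqrt (2*t) * Real.sqrt (2*(1-t)) ≤ 1 := by
    rw [← Real.sqrt_mul (by positivity)]
    calc Real.sqrt (2*t*(2*(1-t))) ≤ Real.sqrt 1 := Real.sqrt_le_sqrt (by nlinarith [sq_nonneg (2*t-1)])
      _ = 1 := Real.sqrt_one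
  nlinarith [Real.sqrt_nonneg (2*t), Real.sqrt_nonneg (2*(1-t))]

lemma density_00_mem {k : ℕ} (σ : Matrix (Fin (k+2)) (Fin (k+2)) ℂ) (hσ : IsDensity σ) :
    0 ≤ (σ 0 0).re ∧ (σ 0 0).re ≤ 1 := by
  refine ⟨(psd_diag_re_nonneg hσ.1 0).1, ?_⟩
  have htr : (σ.trace).re = 1 := by rw [hσ.2]; norm_num
  have hdec : (σ.trace).re = ∑ i, (σ i i).re := by
    simp [Matrix.trace, Matrix.diag, Complex.re_sum]
  have hle : (σ 0 0).re ≤ ∑ i, (σ i i).re :=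
    Finset.single_le_sum (fun i _ => (psd_diag_re_nonneg hσ.1 i).1) (Finset.mem_univ 0)
  rw [← hdec, htr] at hle
  exact hle

lemma tendsto_aux : Filter.Tendsto (fun n : ℕ => 4 * Real.sqrt ((n : ℝ) - 1) / n)
    Filter.atTop (nhds 0) := by
  have hsq : Filter.Tendsto (fun n : ℕ => Real.sqrt n) Filter.atTop Filter.atTop := by
    rw [Filter.tendsto_atTop_atTop]
    intro b
    refine ⟨⌈b^2⌉₊, fun n hn => ?_⟩
    have h1 : b^2 ≤ (n : ℝ) := le_trans (Nat.le_ceil _) (by exact_mod_cast hn)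
    calc b ≤ |b| := le_abs_self b
      _ = Real.sqrt (b^2) := (Real.sqrt_sq_eq_abs b).symm
      _ ≤ Real.sqrt n := Real.sqrt_le_sqrt h1
  have h2 : Filter.Tendsto (fun n : ℕ => 4 / Real.sqrt n) Filter.atTop (nhds 0) :=
    Filter.Tendsto.div_atTop tendsto_const_nhds hsq
  apply squeeze_zero' (Filter.Eventually.of_forall fun n => by positivity)
    ?_ h2
  filter_upwards [Filter.eventually_ge_atTop 1] with n hn
  have hn0 : (0:ℝ) < n := by exact_mod_cast hn
  have hsn : 0 < Real.sqrt n := Real.sqrt_pos.mpr hn0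
  rw [div_le_div_iff₀ hn0 hsn]
  have hle : Real.sqrt ((n:ℝ) - 1) ≤ Real.sqrt n := Real.sqrt_le_sqrt (by linarith)
  have hmul : Real.sqrt n * Real.sqrt n = n := Real.mul_self_sqrt hn0.le
  nlinarith [Real.sqrt_nonneg ((n:ℝ) - 1), Real.sqrt_nonneg (n:ℝ)]


end Aux

/-- for the unitary channels of `I` and `V = diag(1,−1,…,−1)`
(`d ≥ 2`) with difference `Δ`, one has `‖Δ‖_ME = 4√(d−1)/d` while `‖Δ‖_⋄ = 2`;
the supremum defining `‖Δ‖_⋄` is already attained (with value 2) at the rank-one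
density matrix `σ = |+⟩⟨+|`, and `‖Δ‖_ME → 0` as `d → ∞`. -/
theorem stmt19 {d : ℕ} (hd : 2 ≤ d)
    (Delta : Matrix (Fin d) (Fin d) ℂ →ₗ[ℂ] Matrix (Fin d) (Fin d) ℂ)
    (hDelta : Delta = (LinearMap.id : Matrix (Fin d) (Fin d) ℂ →ₗ[ℂ] Matrix (Fin d) (Fin d) ℂ)
        - conjChannel (V19 d)) :
    MENorm Delta = 4 * Real.sqrt ((d : ℝ) - 1) / d
    ∧ diamondNorm Delta = 2
    ∧ IsDensity (Matrix.vecMulVec (plusVec d) (star (plusVec d)))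
    ∧ traceNorm (((1 : Matrix (Fin d) (Fin d) ℂ) ⊗ₖ
          matSqrt (Matrix.vecMulVec (plusVec d) (star (plusVec d)))) * choi Delta *
        ((1 : Matrix (Fin d) (Fin d) ℂ) ⊗ₖ
          matSqrt (Matrix.vecMulVec (plusVec d) (star (plusVec d))))) = 2
    ∧ Filter.Tendsto (fun n : ℕ => 4 * Real.sqrt ((n : ℝ) - 1) / n)
        Filter.atTop (nhds 0) := by
  subst hDelta
  obtain ⟨e, rfl⟩ : ∃ e, d = e + 2 := ⟨d - 2, by omega⟩
  have hcast : ((e + 2 : ℕ) : ℝ) - 1 = (e : ℝ) + 1 := by push_cast; ring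
  have hplus := plus_density e
  have hplusTN : traceNorm (((1 : Matrix (Fin (e+2)) (Fin (e+2)) ℂ) ⊗ₖ
      matSqrt (Matrix.vecMulVec (plusVec (e+2)) (star (plusVec (e+2))))) *
        choi (LinearMap.id - conjChannel (V19 (e+2))) *
      ((1 : Matrix (Fin (e+2)) (Fin (e+2)) ℂ) ⊗ₖ
        matSqrt (Matrix.vecMulVec (plusVec (e+2)) (star (plusVec (e+2)))))) = 2 := by
    rw [traceNorm_conj e _ hplus, plus_00]
    norm_num
  refine ⟨?_, ?_, hplus, hplusTN, tendsto_aux⟩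
  · rw [MENorm, traceNorm_choi_Delta, hcast]
  · apply le_antisymm
    · apply Real.iSup_le
      · rintro ⟨σ, hσ⟩
        rw [traceNorm_conj e σ hσ]
        exact bound_le_two (density_00_mem σ hσ).1 (density_00_mem σ hσ).2
      · norm_num
    · have hbdd : BddAbove (Set.range fun σ : {σ : Matrix (Fin (e+2)) (Fin (e+2)) ℂ //
          IsDensity σ} =>
          traceNorm (((1 : Matrix (Fin (e+2)) (Fin (e+2)) ℂ) ⊗ₖ matSqrt σ.1) *
            choi (LinearMap.id - conjChannel (V19 (e+2))) *
            ((1 : Matrix (Fin (e+2)) (Fin (e+2)) ℂ) ⊗ₖ matSqrt σ.1))) := by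
        refine ⟨2, ?_⟩
        rintro x ⟨σ, rfl⟩
        dsimp only
        rw [traceNorm_conj e σ.1 σ.2]
        exact bound_le_two (density_00_mem σ.1 σ.2).1 (density_00_mem σ.1 σ.2).2
      have hle := le_ciSup hbdd
        (⟨Matrix.vecMulVec (plusVec (e+2)) (star (plusVec (e+2))), hplus⟩ :
          {σ : Matrix (Fin (e+2)) (Fin (e+2)) ℂ // IsDensity σ})
      dsimp only at hle
      rw [hplusTN] at hle
      exact hle


end
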